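/- Let ν : ℝ⁴ → ℂ be differentiable and define μ : ℝ⁵ → ℂ by μ(θ₁, θ₂, θ₃, θ₄, θ₅) = ν(θ₁, θ₂ + θ₃, θ₄, θ₅). Then at every point θ, ∂μ/∂θ₂(θ) = ∂μ/∂θ₃(θ). Consequently, for any finite family of functions μ_s of this form (each μ_s(θ) = ν_s(θ₁, θ₂+θ₃, θ₄, θ₅) with differentiable ν_s) and any σ > 0, the summed Fisher information matrix J = Σ_s (2/σ²)·Re( conj(∂μ_s/∂θ_i) · ∂μ_s/∂θ_j ) has its second row equal to its third row and its second column equal to its third column, and J is not invertible. -/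

import Mathlib

noncomputable def Lmap : (Fin 5 → ℝ) →L[ℝ] (Fin 4 → ℝ) :=
  LinearMap.toContinuousLinearMap
    { toFun := fun v => ![v 0, v 1 + v 2, v 3, v 4]
      map_add' := by
        intro x y; funext i; fin_cases i <;> simp [Matrix.cons_val_zero, Matrix.cons_val_one] <;> ring
      map_smul' := by
        intro c x; funext i; fin_cases i <;> simp <;> ring }

theorem stmt9 (S : Type*) [Fintype S]
    (ν : S → (Fin 4 → ℝ) → ℂ) (hν : ∀ s, Differentiable ℝ (ν s))
    (μ : S → (Fin 5 → ℝ) → ℂ)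
    (hμ : ∀ s θ, μ s θ = ν s ![θ 0, θ 1 + θ 2, θ 3, θ 4])
    (σ : ℝ) (hσ : σ > 0) (θ : Fin 5 → ℝ)
    (J : Matrix (Fin 5) (Fin 5) ℝ)
    (hJ : ∀ i j, J i j = ∑ s, (2 / σ ^ 2) *
      ((starRingEnd ℂ) (fderiv ℝ (μ s) θ (Pi.single i 1)) *
        fderiv ℝ (μ s) θ (Pi.single j 1)).re) :
    (∀ s (θ' : Fin 5 → ℝ),
        fderiv ℝ (μ s) θ' (Pi.single 1 1) = fderiv ℝ (μ s) θ' (Pi.single 2 1))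
    ∧ (∀ j, J 1 j = J 2 j) ∧ (∀ i, J i 1 = J i 2) ∧ ¬ IsUnit J := by
  have hμL : ∀ s, μ s = (ν s) ∘ Lmap := by
    intro s; funext θ'; rw [hμ]; rfl
  have hL12 : (Lmap : (Fin 5 → ℝ) → (Fin 4 → ℝ)) (Pi.single 1 1)
      = Lmap (Pi.single 2 1) := by
    show (![_,_,_,_] : Fin 4 → ℝ) = ![_,_,_,_]
    funext i; fin_cases i <;> simp [Pi.single_apply]
  have key : ∀ s (θ' : Fin 5 → ℝ),
      fderiv ℝ (μ s) θ' (Pi.single 1 1) = fderiv ℝ (μ s) θ' (Pi.single 2 1) := by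
    intro s θ'
    rw [hμL s]
    rw [fderiv_comp θ' (hν s).differentiableAt Lmap.differentiableAt,
      Lmap.fderiv]
    simp only [ContinuousLinearMap.comp_apply, hL12]
  refine ⟨key, ?_, ?_, ?_⟩
  · intro j; rw [hJ, hJ]
    exact Finset.sum_congr rfl fun s _ => by rw [key s θ]
  · intro i; rw [hJ, hJ]
    exact Finset.sum_congr rfl fun s _ => by rw [key s θ]
  · intro hU
    have hdet : J.det = 0 := by
      apply Matrix.det_zero_of_row_eq (i := 1) (j := 2) (by decide)
      funext j; rw [hJ, hJ]
      exact Finset.sum_congr rfl fun s _ => by rw [key s θ]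
    rw [Matrix.isUnit_iff_isUnit_det, hdet] at hU
    exact hU.ne_zero rfl
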